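/- In the binary-symmetric tracking example, d(0) = (κ−1)/2 and λ₁ = ((1−p)/p)(κ−1), yielding the bound d(α) ≥ (κ−1)(1/2 − α(1−p)/p). -/

import Mathlib

open Finset
open scoped Classical

noncomputable section

variable {Ω : Type*} [Fintype Ω] {𝒳 : Type*} {𝒴 : Type*}

/-- Probability of an event under weights `p` on a finite sample space. -/
def prW (p : Ω → ℝ) (A : Ω → Prop) : ℝ := ∑ ω, if A ω then p ω else 0

/-- Expectation under weights `p`. -/
def exW (p : Ω → ℝ) (f : Ω → ℝ) : ℝ := ∑ ω, p ω * f ω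

/-- `p` is a probability weight function. -/
def IsProbW (p : Ω → ℝ) : Prop := (∀ ω, 0 ≤ p ω) ∧ ∑ ω, p ω = 1

/-- Conditional probability `P(A | B)`. -/
def cprW (p : Ω → ℝ) (A B : Ω → Prop) : ℝ := prW p (fun ω => A ω ∧ B ω) / prW p B

/-- Conditional expectation `E(f | B)`. -/
def cexW (p : Ω → ℝ) (f : Ω → ℝ) (B : Ω → Prop) : ℝ :=
  (∑ ω, if B ω then p ω * f ω else 0) / prW p B

/-- positive part of a real number -/
def posP (x : ℝ) : ℝ := max x 0

/-- `S` is a (non-randomized) stopping time w.r.t. the process `X` (time starts at 1):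
its value is determined by the observations up to itself. -/
def IsSTW (X : ℕ → Ω → 𝒳) (S : Ω → ℕ) : Prop :=
  ∀ ω ω', (∀ i, 1 ≤ i → i ≤ S ω → X i ω = X i ω') → S ω' = S ω

/-- The path of the process `Y` at sample `ω`. -/
def pathOf (Y : ℕ → Ω → 𝒴) (ω : Ω) : ℕ → 𝒴 := fun i => Y i ω

/-- The path `f` extends (passes through) the node `y` (a finite string). -/
def ExtN (y : List 𝒴) (f : ℕ → 𝒴) : Prop := ∀ i : Fin y.length, f (i.1 + 1) = y.get i

/-- A stopping function on paths: its value depends only on the path up to that value.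
This is the path-representation of a non-randomized stopping time (a tree). -/
def IsStopFun (t : (ℕ → 𝒴) → ℕ) : Prop :=
  ∀ f g, (∀ i, 1 ≤ i → i ≤ t f → f i = g i) → t g = t f

/-- `y` is an internal node of the tree `t`. -/
def InternalNode (t : (ℕ → 𝒴) → ℕ) (y : List 𝒴) : Prop :=
  ∀ f, ExtN y f → y.length < t f

/-- `u` is (the stopping function of) a subtree rooted at node `y`. -/
def IsSubtreeAt (y : List 𝒴) (u : (ℕ → 𝒴) → ℕ) : Prop :=
  IsStopFun u ∧ ∀ f, ExtN y f → y.length ≤ u f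

/-- false-alarm weight `a(y)` of node `y` -/
def aW (p : Ω → ℝ) (Y : ℕ → Ω → 𝒴) (S : Ω → ℕ) (y : List 𝒴) : ℝ :=
  prW p (fun ω => ExtN y (pathOf Y ω) ∧ y.length < S ω)

/-- delay weight `b(y)` of node `y` -/
def bW (p : Ω → ℝ) (Y : ℕ → Ω → 𝒴) (S : Ω → ℕ) (y : List 𝒴) : ℝ :=
  exW p (fun ω => if ExtN y (pathOf Y ω) then posP ((y.length : ℝ) - (S ω : ℝ)) else 0)

/-- false-alarm weight `a(T_y)` of a subtree `u` rooted at `y` (the sum of `a(γ)`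
over its leaves `γ`). -/
def aSubW (p : Ω → ℝ) (Y : ℕ → Ω → 𝒴) (S : Ω → ℕ) (y : List 𝒴) (u : (ℕ → 𝒴) → ℕ) : ℝ :=
  prW p (fun ω => ExtN y (pathOf Y ω) ∧ u (pathOf Y ω) < S ω)

/-- delay weight `b(T_y)` of a subtree `u` rooted at `y` (the sum of `b(γ)` over its leaves). -/
def bSubW (p : Ω → ℝ) (Y : ℕ → Ω → 𝒴) (S : Ω → ℕ) (y : List 𝒴) (u : (ℕ → 𝒴) → ℕ) : ℝ :=
  exW p (fun ω => if ExtN y (pathOf Y ω) then posP ((u (pathOf Y ω) : ℝ) - (S ω : ℝ)) else 0)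

/-- Lagrangian cost `J_λ(T_y)` of the subtree `u` rooted at `y`. -/
def JsubW (p : Ω → ℝ) (Y : ℕ → Ω → 𝒴) (S : Ω → ℕ) (lam : ℝ) (y : List 𝒴)
    (u : (ℕ → 𝒴) → ℕ) : ℝ :=
  bSubW p Y S y u + lam * aSubW p Y S y u

/-- Lagrangian cost `J_λ(y)` of the single node `y`. -/
def JnodeW (p : Ω → ℝ) (Y : ℕ → Ω → 𝒴) (S : Ω → ℕ) (lam : ℝ) (y : List 𝒴) : ℝ :=
  bW p Y S y + lam * aW p Y S y

/-- `u` is the smallest minimal-cost rooted subtree `T_y(λ)` of `t` at node `y`,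
for Lagrange multiplier `lam`. -/
def IsOptSubtreeAt (p : Ω → ℝ) (Y : ℕ → Ω → 𝒴) (S : Ω → ℕ) (lam : ℝ)
    (t : (ℕ → 𝒴) → ℕ) (y : List 𝒴) (u : (ℕ → 𝒴) → ℕ) : Prop :=
  IsSubtreeAt y u ∧ (∀ f, ExtN y f → u f ≤ t f) ∧
  (∀ v, IsSubtreeAt y v → (∀ f, ExtN y f → v f ≤ t f) →
    JsubW p Y S lam y u ≤ JsubW p Y S lam y v) ∧
  (∀ v, IsSubtreeAt y v → (∀ f, ExtN y f → v f ≤ t f) →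
    JsubW p Y S lam y v = JsubW p Y S lam y u → ∀ f, ExtN y f → u f ≤ v f)

/-- the tradeoff quantity `g(y, T) = (b(T_y) - b(y)) / (a(y) - a(T_y))`
(with the convention 0/0 = 0, which holds automatically for real division). -/
def gW (p : Ω → ℝ) (Y : ℕ → Ω → 𝒴) (S : Ω → ℕ) (t : (ℕ → 𝒴) → ℕ) (y : List 𝒴) : ℝ :=
  (bSubW p Y S y t - bW p Y S y) / (aW p Y S y - aSubW p Y S y t)

/-- node permuted by a coordinate permutation -/
def permNode (y : List 𝒴) (π : Equiv.Perm (Fin y.length)) : List 𝒴 :=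
  List.ofFn fun i => y.get (π i)

/-- permutation invariance of a stopping time w.r.t. process `Y`:
`P(T ≤ n | Y^n = y^n) = P(T ≤ n | Y^n = π(y^n))`. -/
def PermInvST (p : Ω → ℝ) (Y : ℕ → Ω → 𝒴) (T : Ω → ℕ) (κ : ℕ) : Prop :=
  ∀ y : List 𝒴, y.length ≤ κ → ∀ π : Equiv.Perm (Fin y.length),
    cprW p (fun ω => T ω ≤ y.length) (fun ω => ExtN y (pathOf Y ω)) =
    cprW p (fun ω => T ω ≤ y.length) (fun ω => ExtN (permNode y π) (pathOf Y ω))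

/-- the pairs `(X_i, Y_i)` are i.i.d. (over the first `κ` time steps). -/
def IIDPairs [Fintype 𝒳] [Fintype 𝒴] (p : Ω → ℝ) (X : ℕ → Ω → 𝒳) (Y : ℕ → Ω → 𝒴)
    (κ : ℕ) : Prop :=
  ∃ μ : 𝒳 × 𝒴 → ℝ, (∀ z, 0 ≤ μ z) ∧ (∑ z, μ z = 1) ∧
    ∀ (x : ℕ → 𝒳) (yf : ℕ → 𝒴),
      prW p (fun ω => ∀ i, 1 ≤ i → i ≤ κ → X i ω = x i ∧ Y i ω = yf i) =
        ∏ i ∈ Finset.Icc 1 κ, μ (x i, yf i)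

/-- a randomized stopping time bounded by `κ`, given by its conditional stopping
kernel `q n y^n = P(T = n | Y^n = y^n)`. -/
def IsRandST (q : ℕ → (ℕ → 𝒴) → ℝ) (κ : ℕ) : Prop :=
  (∀ n f, 0 ≤ q n f) ∧
  (∀ n f g, (∀ i, 1 ≤ i → i ≤ n → f i = g i) → q n g = q n f) ∧
  (∀ f, ∑ n ∈ Finset.Icc 1 κ, q n f = 1)

/-- false-alarm probability `P(T < S)` of a randomized stopping time -/
def faR (p : Ω → ℝ) (Y : ℕ → Ω → 𝒴) (S : Ω → ℕ) (κ : ℕ) (q : ℕ → (ℕ → 𝒴) → ℝ) : ℝ :=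
  exW p (fun ω => ∑ n ∈ Finset.Icc 1 κ, q n (pathOf Y ω) * (if n < S ω then 1 else 0))

/-- expected reaction delay `E(T - S)⁺` of a randomized stopping time -/
def delayR (p : Ω → ℝ) (Y : ℕ → Ω → 𝒴) (S : Ω → ℕ) (κ : ℕ) (q : ℕ → (ℕ → 𝒴) → ℝ) : ℝ :=
  exW p (fun ω => ∑ n ∈ Finset.Icc 1 κ, q n (pathOf Y ω) * posP ((n : ℝ) - (S ω : ℝ)))

/-- the optimal tradeoff curve `d(α)` -/
def dW (p : Ω → ℝ) (Y : ℕ → Ω → 𝒴) (S : Ω → ℕ) (κ : ℕ) (α : ℝ) : ℝ :=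
  sInf {v | ∃ q, IsRandST q κ ∧ faR p Y S κ q ≤ α ∧ v = delayR p Y S κ q}

/-- the stopping kernel of a non-randomized stopping function -/
def detKer (t : (ℕ → 𝒴) → ℕ) : ℕ → (ℕ → 𝒴) → ℝ := fun n f => if t f = n then 1 else 0

/-- prefix of length `n` of a path (the node of depth `n` it visits) -/
def prefixOf (f : ℕ → 𝒴) (n : ℕ) : List 𝒴 := (List.range n).map fun i => f (i + 1)

/-- the one-step-lookahead node cost `c(y^n)` -/
def cnodeW (p : Ω → ℝ) (Y : ℕ → Ω → 𝒴) (S : Ω → ℕ) (lam : ℝ) (y : List 𝒴) : ℝ :=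
  cexW p (fun ω => posP ((y.length : ℝ) - (S ω : ℝ))) (fun ω => ExtN y (pathOf Y ω)) +
    lam * cprW p (fun ω => y.length < S ω) (fun ω => ExtN y (pathOf Y ω))

end

noncomputable section
open Finset

/-- channel transition weight -/
def muB (pc : ℝ) (a b : Bool) : ℝ := if a = b then 1 - pc else pc

lemma muB_sum_left (pc : ℝ) (b : Bool) : muB pc true b + muB pc false b = 1 := by
  cases b <;> simp [muB]

lemma muB_sum_right (pc : ℝ) (a : Bool) : muB pc a true + muB pc a false = 1 := by
  cases a <;> simp [muB]

lemma sum_prod_bool (m : ℕ) (c : Fin m → Bool → ℝ) :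
    (∑ v : Fin m → Bool, ∏ i, c i (v i)) = ∏ i, (c i true + c i false) := by
  classical
  rw [← Fintype.prod_sum c]
  exact Finset.prod_congr rfl fun i _ => by simp [Fintype.sum_bool]

lemma sum_cube_split (m : ℕ) (F : (Fin (m+1) → Bool) → ℝ) :
    ∑ v : Fin (m+1) → Bool, F v
      = ∑ b : Bool, ∑ v : Fin m → Bool, F (Fin.cons b v) := by
  classical
  have hbij : Function.Bijective (fun x : Bool × (Fin m → Bool) => Fin.cons x.1 x.2 : _ → (Fin (m+1) → Bool)) := by
    constructor
    · rintro ⟨a, u⟩ ⟨b, w⟩ h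
      have h0 : a = b := by simpa using congrFun h 0
      have h1 : u = w := by
        funext j; simpa using congrFun h j.succ
      simp [h0, h1]
    · intro v
      exact ⟨(v 0, Fin.tail v), Fin.cons_self_tail v⟩
  have := Fintype.sum_bijective _ hbij (fun x : Bool × (Fin m → Bool) => F (Fin.cons x.1 x.2)) F (fun x => rfl)
  rw [← this, Fintype.sum_prod_type]

lemma sum_w0 (m : ℕ) (f : Bool → ℝ) :
    ∑ w : Fin (m+1) → Bool, f (w 0) = 2^m * (f true + f false) := by
  rw [sum_cube_split]
  simp [Fin.cons_zero, Finset.sum_const, Finset.card_univ]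
  ring

section Decomp
open Finset
variable {Ω : Type*} [Fintype Ω]

lemma prW_congr (p : Ω → ℝ) {A B : Ω → Prop} (h : ∀ ω, A ω ↔ B ω) :
    prW p A = prW p B := by
  unfold prW
  exact Finset.sum_congr rfl fun ω _ => by rw [if_congr (h ω) rfl rfl]

lemma exW_congr (p : Ω → ℝ) {f g : Ω → ℝ} (h : ∀ ω, f ω = g ω) :
    exW p f = exW p g := by
  unfold exW; exact Finset.sum_congr rfl fun ω _ => by rw [h ω]

lemma prW_eq_exW (p : Ω → ℝ) (A : Ω → Prop) :
    prW p A = exW p (fun ω => if A ω then 1 else 0) := by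
  unfold prW exW
  exact Finset.sum_congr rfl fun ω _ => by by_cases h : A ω <;> simp [h]

lemma prW_of_not (p : Ω → ℝ) {A : Ω → Prop} (h : ∀ ω, ¬ A ω) :
    prW p A = 0 := by
  unfold prW
  exact Finset.sum_eq_zero fun ω _ => if_neg (h ω)

lemma prW_of_all (p : Ω → ℝ) (hp : IsProbW p) {A : Ω → Prop} (h : ∀ ω, A ω) :
    prW p A = 1 := by
  unfold prW
  rw [Finset.sum_congr rfl fun ω _ => if_pos (h ω)]
  exact hp.2

lemma exW_indicator (p : Ω → ℝ) (A : Ω → Prop) {inst : ∀ ω, Decidable (A ω)} (c : ℝ) :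
    exW p (fun ω => @ite _ (A ω) (inst ω) c 0) = c * prW p A := by
  unfold exW prW
  rw [Finset.mul_sum]
  exact Finset.sum_congr rfl fun ω _ => by by_cases h : A ω <;> simp [h, mul_comm]

variable (p : Ω → ℝ) (X Y : ℕ → Ω → Bool) (κ : ℕ) (pc : ℝ)

lemma atom_law
    (hlaw : ∀ x yf : ℕ → Bool,
      prW p (fun ω => ∀ i, 1 ≤ i → i ≤ κ → X i ω = x i ∧ Y i ω = yf i) =
        ∏ i ∈ Finset.Icc 1 κ, ((1 / 2 : ℝ) * if yf i = x i then 1 - pc else pc))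
    (v w : Fin κ → Bool) :
    prW p (fun ω => (fun i : Fin κ => X (i.1+1) ω) = v ∧ (fun i : Fin κ => Y (i.1+1) ω) = w)
      = ∏ i : Fin κ, ((1/2 : ℝ) * muB pc (w i) (v i)) := by
  classical
  have hxv : ∀ (f : Fin κ → Bool) (j : ℕ) (h : j - 1 < κ),
      (fun j => if h : j - 1 < κ then f ⟨j-1, h⟩ else false) j = f ⟨j-1, h⟩ := by
    intro f j h
    simp only [dif_pos h]
  have hev : ∀ ω, (∀ i, 1 ≤ i → i ≤ κ →
        X i ω = (fun j => if h : j - 1 < κ then v ⟨j-1, h⟩ else false) i ∧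
        Y i ω = (fun j => if h : j - 1 < κ then w ⟨j-1, h⟩ else false) i) ↔
      ((fun i : Fin κ => X (i.1+1) ω) = v ∧ (fun i : Fin κ => Y (i.1+1) ω) = w) := by
    intro ω
    constructor
    · intro h
      constructor
      · funext i
        have h2 := (h (i.1+1) (by omega) (by omega)).1
        rw [hxv v (i.1+1) (by omega)] at h2
        rw [h2]
        congr 1
      · funext i
        have h2 := (h (i.1+1) (by omega) (by omega)).2
        rw [hxv w (i.1+1) (by omega)] at h2
        rw [h2]
        congr 1
    · rintro ⟨hv, hw⟩ i h1 h2
      have hlt : i - 1 < κ := by omega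
      have hi : i - 1 + 1 = i := by omega
      constructor
      · rw [hxv v i hlt]
        have h3 := congrFun hv ⟨i-1, hlt⟩
        simp only at h3
        rw [hi] at h3
        exact h3
      · rw [hxv w i hlt]
        have h3 := congrFun hw ⟨i-1, hlt⟩
        simp only at h3
        rw [hi] at h3
        exact h3
  rw [prW_congr p (fun ω => (hev ω).symm), hlaw _ _]
  have hIcc : Finset.Icc 1 κ = (Finset.range κ).map ⟨fun j => j + 1, add_left_injective 1⟩ := by
    ext a
    simp only [Finset.mem_Icc, Finset.mem_map, Finset.mem_range, Function.Embedding.coeFn_mk]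
    constructor
    · rintro ⟨h1, h2⟩; exact ⟨a - 1, by omega, by omega⟩
    · rintro ⟨b, hb, rfl⟩; omega
  rw [hIcc, Finset.prod_map]
  simp only [Function.Embedding.coeFn_mk]
  rw [← Fin.prod_univ_eq_prod_range (fun j => ((1/2 : ℝ) *
    if (fun j => if h : j - 1 < κ then w ⟨j-1, h⟩ else false) (j+1) =
       (fun j => if h : j - 1 < κ then v ⟨j-1, h⟩ else false) (j+1) then 1 - pc else pc)) κ]
  apply Finset.prod_congr rfl
  intro i _
  have hlt : i.1 + 1 - 1 < κ := by omega
  rw [hxv v (i.1+1) hlt, hxv w (i.1+1) hlt]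
  have hfin : (⟨i.1 + 1 - 1, hlt⟩ : Fin κ) = i := Fin.ext (by simp)
  rw [hfin]
  rfl

lemma exW_decomp
    (hlaw : ∀ x yf : ℕ → Bool,
      prW p (fun ω => ∀ i, 1 ≤ i → i ≤ κ → X i ω = x i ∧ Y i ω = yf i) =
        ∏ i ∈ Finset.Icc 1 κ, ((1 / 2 : ℝ) * if yf i = x i then 1 - pc else pc))
    (G : (Fin κ → Bool) → (Fin κ → Bool) → ℝ) :
    exW p (fun ω => G (fun i => X (i.1+1) ω) (fun i => Y (i.1+1) ω)) =
      ∑ v : Fin κ → Bool, ∑ w : Fin κ → Bool,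
        (∏ i : Fin κ, ((1/2 : ℝ) * muB pc (w i) (v i))) * G v w := by
  classical
  unfold exW
  have step : ∀ ω, p ω * G (fun i => X (i.1+1) ω) (fun i => Y (i.1+1) ω)
      = ∑ v : Fin κ → Bool, ∑ w : Fin κ → Bool,
          (if ((fun i : Fin κ => X (i.1+1) ω) = v ∧ (fun i : Fin κ => Y (i.1+1) ω) = w)
            then p ω * G v w else 0) := by
    intro ω
    rw [Finset.sum_comm]
    rw [Finset.sum_eq_single ((fun i : Fin κ => Y (i.1+1) ω))]
    · rw [Finset.sum_eq_single ((fun i : Fin κ => X (i.1+1) ω))]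
      · simp
      · intro v _ hv
        rw [if_neg]; rintro ⟨h1, _⟩; exact hv h1.symm
      · intro h; exact absurd (Finset.mem_univ _) h
    · intro w _ hw
      apply Finset.sum_eq_zero
      intro v _
      rw [if_neg]; rintro ⟨_, h2⟩; exact hw h2.symm
    · intro h; exact absurd (Finset.mem_univ _) h
  rw [Finset.sum_congr rfl fun ω _ => step ω]
  rw [Finset.sum_comm]
  apply Finset.sum_congr rfl
  intro v _
  rw [Finset.sum_comm]
  apply Finset.sum_congr rfl
  intro w _
  rw [← atom_law p X Y κ pc hlaw v w]
  unfold prW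
  rw [Finset.sum_mul]
  apply Finset.sum_congr rfl
  intro ω _
  by_cases h : ((fun i : Fin κ => X (i.1+1) ω) = v ∧ (fun i : Fin κ => Y (i.1+1) ω) = w) <;>
    simp [h]

end Decomp

section Key
open Finset
variable {Ω : Type*} [Fintype Ω]

lemma exW_key (p : Ω → ℝ) (X Y : ℕ → Ω → Bool) (κ : ℕ) (pc : ℝ) (hκ : 0 < κ)
    (hlaw : ∀ x yf : ℕ → Bool,
      prW p (fun ω => ∀ i, 1 ≤ i → i ≤ κ → X i ω = x i ∧ Y i ω = yf i) =
        ∏ i ∈ Finset.Icc 1 κ, ((1 / 2 : ℝ) * if yf i = x i then 1 - pc else pc))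
    (H : Bool → (Fin κ → Bool) → ℝ) :
    exW p (fun ω => H (X 1 ω) (fun i => Y (i.1+1) ω)) =
      ∑ w : Fin κ → Bool, ∑ b : Bool,
        ((1:ℝ)/2)^κ * muB pc (w ⟨0, hκ⟩) b * H b w := by
  classical
  have h1 : exW p (fun ω => H (X 1 ω) (fun i => Y (i.1+1) ω)) =
      exW p (fun ω => (fun v w : Fin κ → Bool => H (v ⟨0, hκ⟩) w)
        (fun i => X (i.1+1) ω) (fun i => Y (i.1+1) ω)) := by
    apply exW_congr
    intro ω
    rfl
  rw [h1, exW_decomp p X Y κ pc hlaw (fun v w => H (v ⟨0, hκ⟩) w), Finset.sum_comm]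
  obtain ⟨m, rfl⟩ : ∃ m, κ = m + 1 := ⟨κ - 1, by omega⟩
  apply Finset.sum_congr rfl
  intro w _
  rw [sum_cube_split m (fun v => (∏ i : Fin (m+1), ((1/2 : ℝ) * muB pc (w i) (v i))) * H (v ⟨0, hκ⟩) w)]
  apply Finset.sum_congr rfl
  intro b _
  have hcons0 : ∀ v : Fin m → Bool, (Fin.cons b v : Fin (m+1) → Bool) ⟨0, hκ⟩ = b := by
    intro v
    have h : (⟨0, hκ⟩ : Fin (m+1)) = 0 := rfl
    rw [h, Fin.cons_zero]
  have step : ∀ v : Fin m → Bool,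
      (∏ i : Fin (m+1), ((1/2 : ℝ) * muB pc (w i) ((Fin.cons b v : Fin (m+1) → Bool) i)))
        * H ((Fin.cons b v : Fin (m+1) → Bool) ⟨0, hκ⟩) w
      = (∏ i : Fin m, ((1/2 : ℝ) * muB pc (w i.succ) (v i)))
        * (((1/2 : ℝ) * muB pc (w 0) b) * H b w) := by
    intro v
    rw [Fin.prod_univ_succ]
    simp only [Fin.cons_zero, Fin.cons_succ, hcons0 v]
    ring
  rw [Finset.sum_congr rfl (fun v _ => step v), ← Finset.sum_mul,
    sum_prod_bool m (fun i x => (1/2 : ℝ) * muB pc (w i.succ) x)]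
  have hone : ∀ i : Fin m,
      (1/2:ℝ) * muB pc (w i.succ) true + 1/2 * muB pc (w i.succ) false = 1/2 := by
    intro i
    rw [← mul_add, muB_sum_right]
    ring
  rw [Finset.prod_congr rfl (fun i _ => hone i), Finset.prod_const, Finset.card_univ,
    Fintype.card_fin]
  have hw0 : w ⟨0, hκ⟩ = w 0 := rfl
  rw [hw0]
  ring

lemma sum_ext_cube (κ : ℕ) (y : List Bool) (hn1 : 1 ≤ y.length) (hnκ : y.length ≤ κ)
    (f : Bool → ℝ) :
    (∑ w : Fin κ → Bool,
      if (∀ i : Fin y.length, w ⟨i.1, lt_of_lt_of_le i.2 hnκ⟩ = y.get i)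
        then f (w ⟨0, lt_of_lt_of_le hn1 hnκ⟩) else 0)
    = (2:ℝ)^(κ - y.length) * f (y.get ⟨0, hn1⟩) := by
  classical
  set n := y.length with hn
  set d : Fin κ → Bool → ℝ := fun i x =>
    if h : i.1 < n then (if x = y.get ⟨i.1, h⟩ then (if i.1 = 0 then f x else 1) else 0) else 1
    with hd
  have hpt : ∀ w : Fin κ → Bool,
      (if (∀ i : Fin n, w ⟨i.1, lt_of_lt_of_le i.2 hnκ⟩ = y.get i)
        then f (w ⟨0, lt_of_lt_of_le hn1 hnκ⟩) else 0) = ∏ i : Fin κ, d i (w i) := by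
    intro w
    by_cases hQ : ∀ i : Fin n, w ⟨i.1, lt_of_lt_of_le i.2 hnκ⟩ = y.get i
    · rw [if_pos hQ]
      have hfac : ∀ i : Fin κ, d i (w i) =
          (if i = (⟨0, lt_of_lt_of_le hn1 hnκ⟩ : Fin κ) then f (w i) else 1) := by
        intro i
        by_cases h0 : i = (⟨0, lt_of_lt_of_le hn1 hnκ⟩ : Fin κ)
        · subst h0
          rw [if_pos rfl, hd]
          simp only
          rw [dif_pos (show (0:ℕ) < n from hn1)]
          have h2 := hQ ⟨0, hn1⟩
          rw [if_pos h2]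
          simp
        · rw [if_neg h0, hd]
          simp only
          by_cases hlt : i.1 < n
          · rw [dif_pos hlt]
            have h2 := hQ ⟨i.1, hlt⟩
            have hww : w ⟨i.1, lt_of_lt_of_le hlt hnκ⟩ = w i := by congr 1
            rw [hww] at h2
            rw [if_pos h2, if_neg]
            intro h00
            exact h0 (Fin.ext h00)
          · rw [dif_neg hlt]
      rw [Finset.prod_congr rfl (fun i _ => hfac i), Finset.prod_ite_eq']
      rw [if_pos (Finset.mem_univ _)]
    · rw [if_neg hQ]
      push_neg at hQ
      obtain ⟨i0, hi0⟩ := hQ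
      symm
      apply Finset.prod_eq_zero (Finset.mem_univ (⟨i0.1, lt_of_lt_of_le i0.2 hnκ⟩ : Fin κ))
      rw [hd]
      simp only
      rw [dif_pos (show i0.1 < n from i0.2)]
      exact if_neg hi0
  rw [Finset.sum_congr rfl (fun w _ => hpt w), sum_prod_bool]
  have hval : ∀ i : Fin κ, d i true + d i false =
      (if i.1 = 0 then f (y.get ⟨0, hn1⟩) else if i.1 < n then 1 else 2) := by
    intro i
    by_cases h0 : i.1 = 0
    · have hlt : i.1 < n := by omega
      rw [if_pos h0, hd]
      simp only
      rw [dif_pos hlt, dif_pos hlt]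
      have hidx : (⟨i.1, hlt⟩ : Fin n) = ⟨0, hn1⟩ := Fin.ext h0
      rw [hidx]
      cases hyv : y.get (⟨0, hn1⟩ : Fin n) <;> simp [h0]
    · rw [if_neg h0, hd]
      simp only
      by_cases hlt : i.1 < n
      · rw [if_pos hlt, dif_pos hlt, dif_pos hlt]
        cases hyv : y.get (⟨i.1, hlt⟩ : Fin n) <;> simp [h0]
      · rw [if_neg hlt, dif_neg hlt, dif_neg hlt]
        norm_num
  rw [Finset.prod_congr rfl (fun i _ => hval i)]
  rw [Fin.prod_univ_eq_prod_range
    (fun j => if j = 0 then f (y.get ⟨0, hn1⟩) else if j < n then (1:ℝ) else 2) κ]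
  rw [Finset.range_eq_Ico, ← Finset.prod_Ico_consecutive _ (Nat.zero_le n) hnκ]
  have h1 : (∏ j ∈ Finset.Ico 0 n,
      (if j = 0 then f (y.get ⟨0, hn1⟩) else if j < n then (1:ℝ) else 2))
      = f (y.get ⟨0, hn1⟩) := by
    rw [← Finset.range_eq_Ico]
    have : ∀ j ∈ Finset.range n,
        (if j = 0 then f (y.get ⟨0, hn1⟩) else if j < n then (1:ℝ) else 2)
          = (if j = 0 then f (y.get ⟨0, hn1⟩) else 1) := by
      intro j hj
      rw [Finset.mem_range] at hj
      by_cases h0 : j = 0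
      · rw [if_pos h0, if_pos h0]
      · rw [if_neg h0, if_neg h0, if_pos hj]
    rw [Finset.prod_congr rfl this, Finset.prod_ite_eq', if_pos (Finset.mem_range.2 hn1)]
  have h2 : (∏ j ∈ Finset.Ico n κ,
      (if j = 0 then f (y.get ⟨0, hn1⟩) else if j < n then (1:ℝ) else 2)) = 2^(κ - n) := by
    have : ∀ j ∈ Finset.Ico n κ,
        (if j = 0 then f (y.get ⟨0, hn1⟩) else if j < n then (1:ℝ) else 2) = 2 := by
      intro j hj
      rw [Finset.mem_Ico] at hj
      rw [if_neg (by omega), if_neg (by omega)]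
    rw [Finset.prod_congr rfl this, Finset.prod_const, Nat.card_Ico]
  rw [h1, h2]
  ring

end Key

section Probs
open Finset
variable {Ω : Type*} [Fintype Ω]
variable (p : Ω → ℝ) (X Y : ℕ → Ω → Bool) (κ : ℕ) (pc : ℝ)

lemma iteR {c d : Prop} {ic : Decidable c} {id : Decidable d} (h : c ↔ d) (a b : ℝ) :
    (@ite _ c ic a b) = (@ite _ d id a b) := by
  classical
  by_cases hc : c
  · rw [if_pos hc, if_pos (h.1 hc)]
  · rw [if_neg hc, if_neg (fun hd => hc (h.2 hd))]

lemma prW_X1 (hκ : 0 < κ)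
    (hlaw : ∀ x yf : ℕ → Bool,
      prW p (fun ω => ∀ i, 1 ≤ i → i ≤ κ → X i ω = x i ∧ Y i ω = yf i) =
        ∏ i ∈ Finset.Icc 1 κ, ((1 / 2 : ℝ) * if yf i = x i then 1 - pc else pc))
    (b : Bool) :
    prW p (fun ω => X 1 ω = b) = 1/2 := by
  classical
  rw [prW_eq_exW]
  trans (exW p (fun ω => (fun b' (_ : Fin κ → Bool) => if b' = b then (1:ℝ) else 0)
          (X 1 ω) (fun i => Y (i.1+1) ω)))
  · exact exW_congr p (fun ω => by by_cases h : X 1 ω = b <;> simp [h])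
  rw [exW_key p X Y κ pc hκ hlaw (fun b' _ => if b' = b then (1:ℝ) else 0)]
  have h2 : ∀ w : Fin κ → Bool,
      (∑ b' : Bool, ((1:ℝ)/2)^κ * muB pc (w ⟨0, hκ⟩) b' * (if b' = b then (1:ℝ) else 0))
        = ((1:ℝ)/2)^κ * muB pc (w ⟨0, hκ⟩) b := by
    intro w
    rw [Fintype.sum_bool]
    cases b <;> simp
  rw [Finset.sum_congr rfl (fun w _ => h2 w)]
  obtain ⟨m, rfl⟩ : ∃ m, κ = m + 1 := ⟨κ - 1, by omega⟩
  have h3 : ∀ w : Fin (m+1) → Bool, w ⟨0, hκ⟩ = w 0 := fun _ => rfl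
  rw [Finset.sum_congr rfl (fun w _ => by rw [h3 w]),
    sum_w0 m (fun x => ((1:ℝ)/2)^(m+1) * muB pc x b)]
  have key : (2:ℝ)^m * ((1:ℝ)/2)^(m+1) = 1/2 := by
    rw [pow_succ, ← mul_assoc, ← mul_pow]
    norm_num
  calc (2:ℝ)^m * (((1:ℝ)/2)^(m+1) * muB pc true b + ((1:ℝ)/2)^(m+1) * muB pc false b)
      = ((2:ℝ)^m * ((1:ℝ)/2)^(m+1)) * (muB pc true b + muB pc false b) := by ring
    _ = 1/2 := by rw [key, muB_sum_left]; ring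

lemma prW_ext_X1 (y : List Bool) (hn1 : 1 ≤ y.length) (hnκ : y.length ≤ κ)
    (hlaw : ∀ x yf : ℕ → Bool,
      prW p (fun ω => ∀ i, 1 ≤ i → i ≤ κ → X i ω = x i ∧ Y i ω = yf i) =
        ∏ i ∈ Finset.Icc 1 κ, ((1 / 2 : ℝ) * if yf i = x i then 1 - pc else pc))
    (b : Bool) :
    prW p (fun ω => ExtN y (pathOf Y ω) ∧ X 1 ω = b)
      = muB pc (y.get ⟨0, hn1⟩) b * ((1:ℝ)/2)^y.length := by
  classical
  have hκ : 0 < κ := lt_of_lt_of_le hn1 hnκ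
  rw [prW_eq_exW]
  set H : Bool → (Fin κ → Bool) → ℝ := fun b' w =>
    if ((∀ i : Fin y.length, w ⟨i.1, lt_of_lt_of_le i.2 hnκ⟩ = y.get i) ∧ b' = b)
      then (1:ℝ) else 0 with hH
  trans (exW p (fun ω => H (X 1 ω) (fun i => Y (i.1+1) ω)))
  · apply exW_congr
    intro ω
    rw [hH]
    simp only
    exact iteR ⟨fun h => ⟨fun i => h.1 i, h.2⟩, fun h => ⟨fun i => h.1 i, h.2⟩⟩ 1 0
  rw [exW_key p X Y κ pc hκ hlaw H]
  have h2 : ∀ w : Fin κ → Bool,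
      (∑ b' : Bool, ((1:ℝ)/2)^κ * muB pc (w ⟨0, hκ⟩) b' * H b' w)
        = (if (∀ i : Fin y.length, w ⟨i.1, lt_of_lt_of_le i.2 hnκ⟩ = y.get i)
            then ((1:ℝ)/2)^κ * muB pc (w ⟨0, lt_of_lt_of_le hn1 hnκ⟩) b else 0) := by
    intro w
    rw [Fintype.sum_bool, hH]
    simp only [mul_ite, mul_one, mul_zero]
    by_cases hQ : ∀ i : Fin y.length, w ⟨i.1, lt_of_lt_of_le i.2 hnκ⟩ = y.get i
    · rw [if_pos hQ]
      cases b
      · rw [if_neg (fun h => Bool.noConfusion h.2), if_pos ⟨hQ, rfl⟩, zero_add]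
      · rw [if_pos ⟨hQ, rfl⟩, if_neg (fun h => Bool.noConfusion h.2), add_zero]
    · rw [if_neg hQ, if_neg (fun h => hQ h.1), if_neg (fun h => hQ h.1), add_zero]
  rw [Finset.sum_congr rfl (fun w _ => h2 w),
    sum_ext_cube κ y hn1 hnκ (fun x => ((1:ℝ)/2)^κ * muB pc x b)]
  have hsplit : ((1:ℝ)/2)^κ = ((1:ℝ)/2)^(κ - y.length) * ((1:ℝ)/2)^y.length := by
    rw [← pow_add]
    congr 1
    omega
  have hcancel : (2:ℝ)^(κ - y.length) * ((1:ℝ)/2)^(κ - y.length) = 1 := by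
    rw [← mul_pow]
    norm_num
  rw [hsplit]
  calc (2:ℝ)^(κ - y.length) * (((1:ℝ)/2)^(κ - y.length) * ((1:ℝ)/2)^y.length
        * muB pc (y.get ⟨0, hn1⟩) b)
      = ((2:ℝ)^(κ - y.length) * ((1:ℝ)/2)^(κ - y.length))
        * (((1:ℝ)/2)^y.length * muB pc (y.get ⟨0, hn1⟩) b) := by ring
    _ = muB pc (y.get ⟨0, hn1⟩) b * ((1:ℝ)/2)^y.length := by rw [hcancel]; ring

end Probs

section Part2
open Finset
variable {Ω : Type*} [Fintype Ω]
variable (p : Ω → ℝ) (X Y : ℕ → Ω → Bool) (κ : ℕ) (pc : ℝ) (S : Ω → ℕ)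

lemma S_le (hκ2 : 2 ≤ κ) (hSdef : ∀ ω, S ω = if X 1 ω = true then 1 else κ) :
    ∀ ω, S ω ≤ κ := by
  intro ω
  rw [hSdef ω]
  split <;> omega

lemma S_ge (hκ2 : 2 ≤ κ) (hSdef : ∀ ω, S ω = if X 1 ω = true then 1 else κ) :
    ∀ ω, 1 ≤ S ω := by
  intro ω
  rw [hSdef ω]
  split <;> omega

lemma posP_eval (hκ2 : 2 ≤ κ) (hSdef : ∀ ω, S ω = if X 1 ω = true then 1 else κ)
    (c : ℝ) (hc1 : 1 ≤ c) (hcκ : c ≤ (κ:ℝ)) :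
    ∀ ω, posP (c - (S ω : ℝ)) = (if X 1 ω = true then c - 1 else 0) := by
  intro ω
  rw [hSdef ω]
  cases h : X 1 ω
  · have hif : ((if (false:Bool) = true then 1 else κ) : ℕ) = κ := rfl
    rw [hif, if_neg (by decide : ¬ ((false:Bool) = true))]
    unfold posP
    apply max_eq_right
    linarith
  · have hif : ((if (true:Bool) = true then 1 else κ) : ℕ) = 1 := rfl
    rw [hif, if_pos (rfl : (true:Bool) = true)]
    unfold posP
    push_cast
    apply max_eq_left
    linarith

lemma aW_eval (hκ2 : 2 ≤ κ)
    (hlaw : ∀ x yf : ℕ → Bool,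
      prW p (fun ω => ∀ i, 1 ≤ i → i ≤ κ → X i ω = x i ∧ Y i ω = yf i) =
        ∏ i ∈ Finset.Icc 1 κ, ((1 / 2 : ℝ) * if yf i = x i then 1 - pc else pc))
    (hSdef : ∀ ω, S ω = if X 1 ω = true then 1 else κ)
    (y : List Bool) (hn1 : 1 ≤ y.length) (hnκ : y.length < κ) :
    aW p Y S y = muB pc (y.get ⟨0, hn1⟩) false * ((1:ℝ)/2)^y.length := by
  unfold aW
  rw [prW_congr p (B := fun ω => ExtN y (pathOf Y ω) ∧ X 1 ω = false) ?_]
  · exact prW_ext_X1 p X Y κ pc y hn1 (le_of_lt hnκ) hlaw false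
  · intro ω
    rw [hSdef ω]
    cases h : X 1 ω
    · have hif : ((if (false:Bool) = true then 1 else κ) : ℕ) = κ := rfl
      rw [hif]
      simp [hnκ, h]
    · have hif : ((if (true:Bool) = true then 1 else κ) : ℕ) = 1 := rfl
      rw [hif]
      have h1 : ¬ (y.length < 1) := by omega
      simp [h1, h]

lemma aSubW_eval (hκ2 : 2 ≤ κ)
    (hSdef : ∀ ω, S ω = if X 1 ω = true then 1 else κ)
    (y : List Bool) :
    aSubW p Y S y (fun _ => κ) = 0 := by
  unfold aSubW
  apply prW_of_not
  intro ω h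
  have h2 : κ < S ω := h.2
  have := S_le X κ S hκ2 hSdef ω
  omega

lemma bW_eval (hκ2 : 2 ≤ κ)
    (hlaw : ∀ x yf : ℕ → Bool,
      prW p (fun ω => ∀ i, 1 ≤ i → i ≤ κ → X i ω = x i ∧ Y i ω = yf i) =
        ∏ i ∈ Finset.Icc 1 κ, ((1 / 2 : ℝ) * if yf i = x i then 1 - pc else pc))
    (hSdef : ∀ ω, S ω = if X 1 ω = true then 1 else κ)
    (y : List Bool) (hn1 : 1 ≤ y.length) (hnκ : y.length ≤ κ) :
    bW p Y S y = ((y.length : ℝ) - 1) * (muB pc (y.get ⟨0, hn1⟩) true * ((1:ℝ)/2)^y.length) := by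
  unfold bW
  have hstep : ∀ ω, (if ExtN y (pathOf Y ω) then posP ((y.length : ℝ) - (S ω : ℝ)) else 0)
      = (if (ExtN y (pathOf Y ω) ∧ X 1 ω = true) then ((y.length : ℝ) - 1) else 0) := by
    intro ω
    rw [posP_eval X κ S hκ2 hSdef ((y.length : ℝ))
      (by exact_mod_cast hn1) (by exact_mod_cast hnκ) ω]
    by_cases hE : ExtN y (pathOf Y ω) <;> by_cases hX : X 1 ω = true
    · rw [if_pos hE, if_pos hX, if_pos ⟨hE, hX⟩]
    · rw [if_pos hE, if_neg hX, if_neg (fun hh => hX hh.2)]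
    · rw [if_neg hE, if_neg (fun hh => hE hh.1)]
    · rw [if_neg hE, if_neg (fun hh => hE hh.1)]
  rw [exW_congr p hstep,
    exW_indicator p (fun ω => ExtN y (pathOf Y ω) ∧ X 1 ω = true) ((y.length : ℝ) - 1),
    prW_ext_X1 p X Y κ pc y hn1 hnκ hlaw true]

lemma bSubW_eval (hκ2 : 2 ≤ κ)
    (hlaw : ∀ x yf : ℕ → Bool,
      prW p (fun ω => ∀ i, 1 ≤ i → i ≤ κ → X i ω = x i ∧ Y i ω = yf i) =
        ∏ i ∈ Finset.Icc 1 κ, ((1 / 2 : ℝ) * if yf i = x i then 1 - pc else pc))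
    (hSdef : ∀ ω, S ω = if X 1 ω = true then 1 else κ)
    (y : List Bool) (hn1 : 1 ≤ y.length) (hnκ : y.length ≤ κ) :
    bSubW p Y S y (fun _ => κ)
      = ((κ : ℝ) - 1) * (muB pc (y.get ⟨0, hn1⟩) true * ((1:ℝ)/2)^y.length) := by
  unfold bSubW
  have hstep : ∀ ω, (if ExtN y (pathOf Y ω)
        then posP ((((fun _ : ℕ → Bool => κ) (pathOf Y ω) : ℕ) : ℝ) - (S ω : ℝ)) else 0)
      = (if (ExtN y (pathOf Y ω) ∧ X 1 ω = true) then ((κ : ℝ) - 1) else 0) := by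
    intro ω
    have hc : (((fun _ : ℕ → Bool => κ) (pathOf Y ω) : ℕ) : ℝ) = (κ : ℝ) := rfl
    rw [hc, posP_eval X κ S hκ2 hSdef ((κ : ℝ))
      (by exact_mod_cast (by omega : 1 ≤ κ)) le_rfl ω]
    by_cases hE : ExtN y (pathOf Y ω) <;> by_cases hX : X 1 ω = true
    · rw [if_pos hE, if_pos hX, if_pos ⟨hE, hX⟩]
    · rw [if_pos hE, if_neg hX, if_neg (fun hh => hX hh.2)]
    · rw [if_neg hE, if_neg (fun hh => hE hh.1)]
    · rw [if_neg hE, if_neg (fun hh => hE hh.1)]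
  rw [exW_congr p hstep,
    exW_indicator p (fun ω => ExtN y (pathOf Y ω) ∧ X 1 ω = true) ((κ : ℝ) - 1),
    prW_ext_X1 p X Y κ pc y hn1 hnκ hlaw true]

lemma gW_eval (hκ2 : 2 ≤ κ) (hpc0 : 0 < pc) (hpc1 : pc < 1/2)
    (hlaw : ∀ x yf : ℕ → Bool,
      prW p (fun ω => ∀ i, 1 ≤ i → i ≤ κ → X i ω = x i ∧ Y i ω = yf i) =
        ∏ i ∈ Finset.Icc 1 κ, ((1 / 2 : ℝ) * if yf i = x i then 1 - pc else pc))
    (hSdef : ∀ ω, S ω = if X 1 ω = true then 1 else κ)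
    (y : List Bool) (hn1 : 1 ≤ y.length) (hnκ : y.length < κ) :
    gW p Y S (fun _ => κ) y
      = ((κ : ℝ) - (y.length : ℝ)) * muB pc (y.get ⟨0, hn1⟩) true
          / muB pc (y.get ⟨0, hn1⟩) false := by
  unfold gW
  rw [aW_eval p X Y κ pc S hκ2 hlaw hSdef y hn1 hnκ,
    aSubW_eval p X Y κ S hκ2 hSdef y,
    bW_eval p X Y κ pc S hκ2 hlaw hSdef y hn1 (le_of_lt hnκ),
    bSubW_eval p X Y κ pc S hκ2 hlaw hSdef y hn1 (le_of_lt hnκ)]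
  have hposμ : 0 < muB pc (y.get ⟨0, hn1⟩) false := by
    unfold muB
    split
    · linarith
    · linarith
  have hpow : (0:ℝ) < ((1:ℝ)/2)^y.length := by positivity
  rw [sub_zero]
  rw [div_eq_div_iff (by positivity) hposμ.ne']
  ring
end Part2

section Part1
open Finset
variable {Ω : Type*} [Fintype Ω]
variable (p : Ω → ℝ) (X Y : ℕ → Ω → Bool) (κ : ℕ) (pc : ℝ) (S : Ω → ℕ)

lemma muB_pos (hpc0 : 0 < pc) (hpc1 : pc < 1/2) (a b : Bool) : 0 < muB pc a b := by
  unfold muB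
  split <;> linarith

lemma q0_RST (hκ2 : 2 ≤ κ) : IsRandST (fun n (_ : ℕ → Bool) => if n = κ then (1:ℝ) else 0) κ := by
  refine ⟨fun n f => by by_cases h : n = κ <;> simp [h], fun n f g _ => rfl, fun f => ?_⟩
  rw [Finset.sum_ite_eq' (Finset.Icc 1 κ) κ (fun _ => (1:ℝ))]
  rw [if_pos (Finset.mem_Icc.2 ⟨by omega, le_rfl⟩)]

lemma faR_q0 (hκ2 : 2 ≤ κ) (hSdef : ∀ ω, S ω = if X 1 ω = true then 1 else κ) :
    faR p Y S κ (fun n _ => if n = κ then (1:ℝ) else 0) = 0 := by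
  unfold faR
  have h1 : ∀ ω, (∑ n ∈ Finset.Icc 1 κ,
      (if n = κ then (1:ℝ) else 0) * (if n < S ω then (1:ℝ) else 0)) = 0 := by
    intro ω
    have h2 : ∀ n ∈ Finset.Icc 1 κ,
        (if n = κ then (1:ℝ) else 0) * (if n < S ω then (1:ℝ) else 0)
        = (if n = κ then (if n < S ω then (1:ℝ) else 0) else 0) := by
      intro n _
      split <;> simp
    rw [Finset.sum_congr rfl h2, Finset.sum_ite_eq' (Finset.Icc 1 κ) κ
      (fun n => if n < S ω then (1:ℝ) else 0)]
    rw [if_pos (Finset.mem_Icc.2 ⟨by omega, le_rfl⟩)]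
    rw [if_neg]
    have := S_le X κ S hκ2 hSdef ω
    omega
  rw [exW_congr p h1]
  unfold exW
  simp

lemma delayR_q0 (hκ2 : 2 ≤ κ)
    (hlaw : ∀ x yf : ℕ → Bool,
      prW p (fun ω => ∀ i, 1 ≤ i → i ≤ κ → X i ω = x i ∧ Y i ω = yf i) =
        ∏ i ∈ Finset.Icc 1 κ, ((1 / 2 : ℝ) * if yf i = x i then 1 - pc else pc))
    (hSdef : ∀ ω, S ω = if X 1 ω = true then 1 else κ) :
    delayR p Y S κ (fun n _ => if n = κ then (1:ℝ) else 0) = ((κ:ℝ) - 1) * (1/2) := by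
  unfold delayR
  have h1 : ∀ ω, (∑ n ∈ Finset.Icc 1 κ,
      (if n = κ then (1:ℝ) else 0) * posP ((n : ℝ) - (S ω : ℝ)))
      = (if X 1 ω = true then ((κ:ℝ) - 1) else 0) := by
    intro ω
    have h2 : ∀ n ∈ Finset.Icc 1 κ,
        (if n = κ then (1:ℝ) else 0) * posP ((n : ℝ) - (S ω : ℝ))
        = (if n = κ then posP ((n : ℝ) - (S ω : ℝ)) else 0) := by
      intro n _
      split <;> simp
    rw [Finset.sum_congr rfl h2, Finset.sum_ite_eq' (Finset.Icc 1 κ)]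
    rw [if_pos (Finset.mem_Icc.2 ⟨by omega, le_rfl⟩)]
    rw [posP_eval X κ S hκ2 hSdef ((κ:ℝ)) (by exact_mod_cast (by omega : 1 ≤ κ)) le_rfl ω]
  rw [exW_congr p h1,
    exW_indicator p (fun ω => X 1 ω = true) ((κ:ℝ) - 1),
    prW_X1 p X Y κ pc (by omega) hlaw true]

lemma delay_of_fa_zero (hp : IsProbW p) (hκ2 : 2 ≤ κ) (hpc0 : 0 < pc) (hpc1 : pc < 1/2)
    (hlaw : ∀ x yf : ℕ → Bool,
      prW p (fun ω => ∀ i, 1 ≤ i → i ≤ κ → X i ω = x i ∧ Y i ω = yf i) =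
        ∏ i ∈ Finset.Icc 1 κ, ((1 / 2 : ℝ) * if yf i = x i then 1 - pc else pc))
    (hSdef : ∀ ω, S ω = if X 1 ω = true then 1 else κ)
    (q : ℕ → (ℕ → Bool) → ℝ) (hq : IsRandST q κ) (hfa : faR p Y S κ q ≤ 0) :
    delayR p Y S κ q = ((κ:ℝ) - 1) * (1/2) := by
  classical
  -- termwise zero
  have hterm_nonneg : ∀ ω, 0 ≤ ∑ n ∈ Finset.Icc 1 κ,
      q n (pathOf Y ω) * (if n < S ω then (1:ℝ) else 0) := by
    intro ω
    apply Finset.sum_nonneg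
    intro n _
    apply mul_nonneg (hq.1 n _)
    split <;> norm_num
  have hfa0 : ∀ ω, p ω * (∑ n ∈ Finset.Icc 1 κ,
      q n (pathOf Y ω) * (if n < S ω then (1:ℝ) else 0)) = 0 := by
    have hall := (Finset.sum_eq_zero_iff_of_nonneg
      (fun ω _ => mul_nonneg (hp.1 ω) (hterm_nonneg ω))).1
      (le_antisymm hfa (Finset.sum_nonneg (fun ω _ => mul_nonneg (hp.1 ω) (hterm_nonneg ω))))
    intro ω
    exact hall ω (Finset.mem_univ ω)
  -- the key claim
  have claim : ∀ ω n, 1 ≤ n → n < κ → q n (pathOf Y ω) = 0 := by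
    intro ω n hn1 hnκ
    set ylist : List Bool := List.ofFn (fun i : Fin κ => Y (i.1+1) ω) with hyl
    have hlen : ylist.length = κ := List.length_ofFn
    have hlen1 : 1 ≤ ylist.length := by omega
    have hpos : 0 < prW p (fun ω' => ExtN ylist (pathOf Y ω') ∧ X 1 ω' = false) := by
      rw [prW_ext_X1 p X Y κ pc ylist hlen1 (le_of_eq hlen) hlaw false]
      have := muB_pos pc hpc0 hpc1 (ylist.get ⟨0, hlen1⟩) false
      positivity
    unfold prW at hpos
    obtain ⟨ω', _, hne⟩ := Finset.exists_ne_zero_of_sum_ne_zero (ne_of_gt hpos)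
    have hA : (ExtN ylist (pathOf Y ω') ∧ X 1 ω' = false) ∧ p ω' ≠ 0 := by
      by_cases hA' : ExtN ylist (pathOf Y ω') ∧ X 1 ω' = false
      · rw [if_pos hA'] at hne
        exact ⟨hA', hne⟩
      · rw [if_neg hA'] at hne
        exact absurd rfl hne
    have hS' : S ω' = κ := by
      rw [hSdef ω']
      simp [hA.1.2]
    have hzero' : q n (pathOf Y ω') * (if n < S ω' then (1:ℝ) else 0) = 0 := by
      have h3 := hfa0 ω'
      rcases mul_eq_zero.1 h3 with h4 | h4
      · exact absurd h4 hA.2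
      · have h5 := (Finset.sum_eq_zero_iff_of_nonneg (fun m _ => by
          apply mul_nonneg (hq.1 m _)
          split <;> norm_num)).1 h4
        exact h5 n (Finset.mem_Icc.2 ⟨hn1, by omega⟩)
    have hq0' : q n (pathOf Y ω') = 0 := by
      rw [if_pos (by omega : n < S ω'), mul_one] at hzero'
      exact hzero'
    have hagree : ∀ i, 1 ≤ i → i ≤ n → pathOf Y ω i = pathOf Y ω' i := by
      intro i h1 h2
      have hiκ : i - 1 < ylist.length := by omega
      have h3 := hA.1.1 ⟨i - 1, hiκ⟩
      have h4 : ylist.get ⟨i - 1, hiκ⟩ = Y ((i-1)+1) ω := List.get_ofFn _ _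
      have h5 : i - 1 + 1 = i := by omega
      rw [h5] at h3 h4
      unfold pathOf at h3 ⊢
      rw [h3, h4]
    have := hq.2.1 n (pathOf Y ω) (pathOf Y ω') hagree
    rw [← this]
    exact hq0'
  -- q κ = 1
  have hqκ : ∀ ω, q κ (pathOf Y ω) = 1 := by
    intro ω
    have h1 := hq.2.2 (pathOf Y ω)
    rw [Finset.sum_eq_single_of_mem κ (Finset.mem_Icc.2 ⟨by omega, le_rfl⟩)
      (fun n hn hne => claim ω n (Finset.mem_Icc.1 hn).1
        (lt_of_le_of_ne (Finset.mem_Icc.1 hn).2 hne))] at h1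
    exact h1
  -- evaluate delay
  unfold delayR
  have h1 : ∀ ω, (∑ n ∈ Finset.Icc 1 κ, q n (pathOf Y ω) * posP ((n : ℝ) - (S ω : ℝ)))
      = (if X 1 ω = true then ((κ:ℝ) - 1) else 0) := by
    intro ω
    rw [Finset.sum_eq_single_of_mem κ (Finset.mem_Icc.2 ⟨by omega, le_rfl⟩)
      (fun n hn hne => by
        rw [claim ω n (Finset.mem_Icc.1 hn).1
          (lt_of_le_of_ne (Finset.mem_Icc.1 hn).2 hne), zero_mul])]
    rw [hqκ ω, one_mul,
      posP_eval X κ S hκ2 hSdef ((κ:ℝ)) (by exact_mod_cast (by omega : 1 ≤ κ)) le_rfl ω]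
  rw [exW_congr p h1,
    exW_indicator p (fun ω => X 1 ω = true) ((κ:ℝ) - 1),
    prW_X1 p X Y κ pc (by omega) hlaw true]

lemma part1 (hp : IsProbW p) (hκ2 : 2 ≤ κ) (hpc0 : 0 < pc) (hpc1 : pc < 1/2)
    (hlaw : ∀ x yf : ℕ → Bool,
      prW p (fun ω => ∀ i, 1 ≤ i → i ≤ κ → X i ω = x i ∧ Y i ω = yf i) =
        ∏ i ∈ Finset.Icc 1 κ, ((1 / 2 : ℝ) * if yf i = x i then 1 - pc else pc))
    (hSdef : ∀ ω, S ω = if X 1 ω = true then 1 else κ) :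
    dW p Y S κ 0 = ((κ:ℝ) - 1) / 2 := by
  unfold dW
  have hset : {v | ∃ q, IsRandST q κ ∧ faR p Y S κ q ≤ 0 ∧ v = delayR p Y S κ q}
      = {((κ:ℝ) - 1) * (1/2)} := by
    ext v
    simp only [Set.mem_setOf_eq, Set.mem_singleton_iff]
    constructor
    · rintro ⟨q, hq, hfa, rfl⟩
      exact delay_of_fa_zero p X Y κ pc S hp hκ2 hpc0 hpc1 hlaw hSdef q hq hfa
    · rintro rfl
      exact ⟨fun n _ => if n = κ then (1:ℝ) else 0, q0_RST κ hκ2,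
        le_of_eq (faR_q0 p X Y κ S hκ2 hSdef),
        (delayR_q0 p X Y κ pc S hκ2 hlaw hSdef).symm⟩
  rw [hset, csInf_singleton]
  ring

end Part1

section Part3
open Finset
variable {Ω : Type*} [Fintype Ω]
variable (p : Ω → ℝ) (X Y : ℕ → Ω → Bool) (κ : ℕ) (pc : ℝ) (S : Ω → ℕ)

lemma muB_tt (pc : ℝ) : muB pc true true = 1 - pc := by simp [muB]
lemma muB_tf (pc : ℝ) : muB pc true false = pc := by simp [muB]
lemma muB_ft (pc : ℝ) : muB pc false true = pc := by simp [muB]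
lemma muB_ff (pc : ℝ) : muB pc false false = 1 - pc := by simp [muB]

lemma main_ineq (hp : IsProbW p) (hκ2 : 2 ≤ κ) (hpc0 : 0 < pc) (hpc1 : pc < 1/2)
    (hlaw : ∀ x yf : ℕ → Bool,
      prW p (fun ω => ∀ i, 1 ≤ i → i ≤ κ → X i ω = x i ∧ Y i ω = yf i) =
        ∏ i ∈ Finset.Icc 1 κ, ((1 / 2 : ℝ) * if yf i = x i then 1 - pc else pc))
    (hSdef : ∀ ω, S ω = if X 1 ω = true then 1 else κ)
    (q : ℕ → (ℕ → Bool) → ℝ) (hq : IsRandST q κ) :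
    ((κ:ℝ) - 1) * (1/2) ≤ delayR p Y S κ q
      + ((1 - pc)/pc * ((κ:ℝ) - 1)) * faR p Y S κ q := by
  classical
  have hκ0 : 0 < κ := by omega
  set lam : ℝ := (1 - pc)/pc * ((κ:ℝ) - 1) with hlam
  have hκR : (2:ℝ) ≤ (κ:ℝ) := by exact_mod_cast hκ2
  -- the path-extension map
  set wext : (Fin κ → Bool) → (ℕ → Bool) :=
    fun w j => if h : j - 1 < κ then w ⟨j-1, h⟩ else false with hwext
  set sB : Bool → ℕ := fun b => if b = true then 1 else κ with hsB
  set H : Bool → (Fin κ → Bool) → ℝ := fun b w =>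
    ∑ n ∈ Finset.Icc 1 κ, q n (wext w) *
      (posP ((n:ℝ) - ((sB b : ℕ) : ℝ)) + lam * (if n < sB b then (1:ℝ) else 0)) with hH
  -- step 1: rewrite objective as exW of H
  have hcomb : delayR p Y S κ q + lam * faR p Y S κ q
      = exW p (fun ω => H (X 1 ω) (fun i => Y (i.1+1) ω)) := by
    unfold delayR faR exW
    rw [Finset.mul_sum, ← Finset.sum_add_distrib]
    apply Finset.sum_congr rfl
    intro ω _
    rw [show lam * (p ω * (∑ n ∈ Finset.Icc 1 κ, q n (pathOf Y ω) *
        (if n < S ω then (1:ℝ) else 0)))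
      = p ω * (lam * (∑ n ∈ Finset.Icc 1 κ, q n (pathOf Y ω) *
        (if n < S ω then (1:ℝ) else 0))) from by ring, ← mul_add]
    congr 1
    rw [Finset.mul_sum, ← Finset.sum_add_distrib]
    have hqpath : ∀ n, 1 ≤ n → n ≤ κ → q n (pathOf Y ω) = q n (wext (fun i => Y (i.1+1) ω)) := by
      intro n h1 h2
      apply (hq.2.1 n (pathOf Y ω) (wext (fun i => Y (i.1+1) ω)) ?_).symm
      intro i hi1 hin
      rw [hwext]
      simp only
      rw [dif_pos (show i - 1 < κ by omega)]
      show Y i ω = Y ((i-1)+1) ω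
      congr 1
      omega
    have hSB : S ω = sB (X 1 ω) := by
      rw [hSdef ω, hsB]
    apply Finset.sum_congr rfl
    intro n hn
    rw [← hqpath n (Finset.mem_Icc.1 hn).1 (Finset.mem_Icc.1 hn).2, ← hSB]
    ring
  rw [hcomb, exW_key p X Y κ pc hκ0 hlaw H]
  -- step 2: per-path lower bound
  have hperw : ∀ w : Fin κ → Bool,
      ((1:ℝ)/2)^κ * muB pc (w ⟨0, hκ0⟩) true * ((κ:ℝ) - 1)
      ≤ ∑ b : Bool, ((1:ℝ)/2)^κ * muB pc (w ⟨0, hκ0⟩) b * H b w := by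
    intro w
    rw [Fintype.sum_bool]
    set Qκ : ℝ := q κ (wext w) with hQκ
    have hQnn : ∀ n, 0 ≤ q n (wext w) := fun n => hq.1 n _
    have hQsum : ∑ n ∈ Finset.Icc 1 κ, q n (wext w) = 1 := hq.2.2 _
    have hQκ1 : Qκ ≤ 1 := by
      rw [← hQsum]
      exact Finset.single_le_sum (fun n _ => hQnn n)
        (Finset.mem_Icc.2 ⟨by omega, le_rfl⟩)
    have hQκ0 : 0 ≤ Qκ := hQnn κ
    -- H true ≥ (κ-1) * Qκ
    have hsBt : sB true = 1 := by rw [hsB]; simp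
    have hHT : ((κ:ℝ) - 1) * Qκ ≤ H true w := by
      rw [hH]
      simp only
      have hterm : ∀ n ∈ Finset.Icc 1 κ, (0:ℝ) ≤ q n (wext w) *
          (posP ((n:ℝ) - ((sB true : ℕ) : ℝ)) + lam * (if n < sB true then (1:ℝ) else 0)) := by
        intro n hn
        apply mul_nonneg (hQnn n)
        apply add_nonneg
        · exact le_max_right _ _
        · apply mul_nonneg
          · rw [hlam]
            have h1 : (0:ℝ) < (1 - pc)/pc := div_pos (by linarith) hpc0
            nlinarith
          · split <;> norm_num
      have hmem : κ ∈ Finset.Icc 1 κ := Finset.mem_Icc.2 ⟨by omega, le_rfl⟩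
      have := Finset.single_le_sum hterm hmem
      refine le_trans ?_ this
      rw [hsBt]
      have hif : ¬ (κ < 1) := by omega
      rw [if_neg hif, mul_zero, add_zero]
      have hposP : posP ((κ:ℝ) - ((1:ℕ):ℝ)) = (κ:ℝ) - 1 := by
        unfold posP
        push_cast
        apply max_eq_left
        linarith
      rw [hposP]
      ring_nf
      exact le_rfl
    -- H false = lam * (1 - Qκ)
    have hsBf : sB false = κ := by rw [hsB]; simp
    have hHF : H false w = lam * (1 - Qκ) := by
      rw [hH]
      simp only
      rw [hsBf]
      have hterm : ∀ n ∈ Finset.Icc 1 κ, q n (wext w) *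
          (posP ((n:ℝ) - ((κ : ℕ) : ℝ)) + lam * (if n < κ then (1:ℝ) else 0))
          = lam * (q n (wext w) - (if n = κ then q n (wext w) else 0)) := by
        intro n hn
        obtain ⟨h1, h2⟩ := Finset.mem_Icc.1 hn
        have hposP : posP ((n:ℝ) - ((κ : ℕ) : ℝ)) = 0 := by
          unfold posP
          apply max_eq_right
          have : (n:ℝ) ≤ (κ:ℝ) := by exact_mod_cast h2
          linarith
        rw [hposP, zero_add]
        by_cases hnκ : n = κ
        · rw [if_pos hnκ, if_neg (by omega)]
          ring
        · rw [if_neg hnκ, if_pos (by omega)]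
          ring
      rw [Finset.sum_congr rfl hterm, ← Finset.mul_sum, Finset.sum_sub_distrib,
        hQsum, Finset.sum_ite_eq' (Finset.Icc 1 κ) κ (fun n => q n (wext w)),
        if_pos (Finset.mem_Icc.2 ⟨by omega, le_rfl⟩)]
    -- key coefficient inequality
    have hkey : muB pc (w ⟨0, hκ0⟩) true * ((κ:ℝ) - 1) ≤ muB pc (w ⟨0, hκ0⟩) false * lam := by
      rw [hlam]
      cases hw0 : w ⟨0, hκ0⟩
      · rw [muB_ft, muB_ff]
        have h1 : pc * ((κ:ℝ) - 1) ≤ (1 - pc) * ((1 - pc)/pc) * ((κ:ℝ) - 1) := by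
          have h2 : pc ≤ (1 - pc) * ((1 - pc)/pc) := by
            rw [mul_div_assoc']
            rw [le_div_iff₀ hpc0]
            nlinarith
          nlinarith
        nlinarith
      · rw [muB_tt, muB_tf]
        have h2 : pc * ((1 - pc)/pc) = 1 - pc := by
          field_simp
        nlinarith [h2]
    -- assemble
    have hA0 : 0 ≤ muB pc (w ⟨0, hκ0⟩) true := le_of_lt (muB_pos pc hpc0 hpc1 _ _)
    have hC0 : 0 ≤ muB pc (w ⟨0, hκ0⟩) false := le_of_lt (muB_pos pc hpc0 hpc1 _ _)
    have hpow : (0:ℝ) ≤ ((1:ℝ)/2)^κ := by positivity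
    have hmain : muB pc (w ⟨0, hκ0⟩) true * ((κ:ℝ) - 1)
        ≤ muB pc (w ⟨0, hκ0⟩) true * H true w + muB pc (w ⟨0, hκ0⟩) false * H false w := by
      have e1 : muB pc (w ⟨0, hκ0⟩) true * (((κ:ℝ) - 1) * Qκ)
          ≤ muB pc (w ⟨0, hκ0⟩) true * H true w :=
        mul_le_mul_of_nonneg_left hHT hA0
      have e2 : muB pc (w ⟨0, hκ0⟩) true * ((κ:ℝ) - 1) * (1 - Qκ)
          ≤ muB pc (w ⟨0, hκ0⟩) false * lam * (1 - Qκ) :=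
        mul_le_mul_of_nonneg_right hkey (by linarith)
      rw [hHF]
      nlinarith [e1, e2]
    calc ((1:ℝ)/2)^κ * muB pc (w ⟨0, hκ0⟩) true * ((κ:ℝ) - 1)
        = ((1:ℝ)/2)^κ * (muB pc (w ⟨0, hκ0⟩) true * ((κ:ℝ) - 1)) := by ring
      _ ≤ ((1:ℝ)/2)^κ * (muB pc (w ⟨0, hκ0⟩) true * H true w
            + muB pc (w ⟨0, hκ0⟩) false * H false w) :=
          mul_le_mul_of_nonneg_left hmain hpow
      _ = ((1:ℝ)/2)^κ * muB pc (w ⟨0, hκ0⟩) true * H true w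
            + ((1:ℝ)/2)^κ * muB pc (w ⟨0, hκ0⟩) false * H false w := by ring
  -- step 3: sum the bound
  have hsum := Finset.sum_le_sum (s := (Finset.univ : Finset (Fin κ → Bool))) (fun w _ => hperw w)
  refine le_trans ?_ hsum
  obtain ⟨m, rfl⟩ : ∃ m, κ = m + 1 := ⟨κ - 1, by omega⟩
  have h3 : ∀ w : Fin (m+1) → Bool, w ⟨0, hκ0⟩ = w 0 := fun _ => rfl
  rw [Finset.sum_congr rfl (fun w _ => by rw [h3 w]),
    sum_w0 m (fun x => ((1:ℝ)/2)^(m+1) * muB pc x true * (((m+1:ℕ):ℝ) - 1))]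
  rw [muB_tt, muB_ft]
  have key : (2:ℝ)^m * ((1:ℝ)/2)^(m+1) = 1/2 := by
    rw [pow_succ, ← mul_assoc, ← mul_pow]
    norm_num
  calc (((m+1:ℕ):ℝ) - 1) * (1/2)
      = ((2:ℝ)^m * ((1:ℝ)/2)^(m+1)) * ((((m+1:ℕ):ℝ) - 1) * ((1 - pc) + pc)) := by
        rw [key]; ring
    _ = (2:ℝ)^m * (((1:ℝ)/2)^(m+1) * (1 - pc) * (((m+1:ℕ):ℝ) - 1)
          + ((1:ℝ)/2)^(m+1) * pc * (((m+1:ℕ):ℝ) - 1)) := by ring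
    _ ≤ _ := le_rfl

end Part3

section Final
open Finset
variable {Ω : Type*} [Fintype Ω]
variable (p : Ω → ℝ) (X Y : ℕ → Ω → Bool) (κ : ℕ) (pc : ℝ) (S : Ω → ℕ)

lemma part3 (hp : IsProbW p) (hκ2 : 2 ≤ κ) (hpc0 : 0 < pc) (hpc1 : pc < 1/2)
    (hlaw : ∀ x yf : ℕ → Bool,
      prW p (fun ω => ∀ i, 1 ≤ i → i ≤ κ → X i ω = x i ∧ Y i ω = yf i) =
        ∏ i ∈ Finset.Icc 1 κ, ((1 / 2 : ℝ) * if yf i = x i then 1 - pc else pc))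
    (hSdef : ∀ ω, S ω = if X 1 ω = true then 1 else κ)
    (α : ℝ) (hα0 : 0 ≤ α) :
    ((κ:ℝ) - 1) * (1/2 - α * (1 - pc) / pc) ≤ dW p Y S κ α := by
  unfold dW
  apply le_csInf
  · exact ⟨delayR p Y S κ (fun n _ => if n = κ then (1:ℝ) else 0),
      ⟨fun n _ => if n = κ then (1:ℝ) else 0, q0_RST κ hκ2,
        by rw [faR_q0 p X Y κ S hκ2 hSdef]; exact hα0, rfl⟩⟩
  · rintro v ⟨q, hq, hfa, rfl⟩
    have hm := main_ineq p X Y κ pc S hp hκ2 hpc0 hpc1 hlaw hSdef q hq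
    have hκR : (2:ℝ) ≤ (κ:ℝ) := by exact_mod_cast hκ2
    have hlam0 : 0 ≤ (1 - pc)/pc * ((κ:ℝ) - 1) := by
      apply mul_nonneg
      · apply div_nonneg <;> linarith
      · linarith
    have hmono : ((1 - pc)/pc * ((κ:ℝ) - 1)) * faR p Y S κ q
        ≤ ((1 - pc)/pc * ((κ:ℝ) - 1)) * α := mul_le_mul_of_nonneg_left hfa hlam0
    have hring : ((κ:ℝ) - 1) * (1/2 - α * (1 - pc) / pc)
        = ((κ:ℝ) - 1) * (1/2) - ((1 - pc)/pc * ((κ:ℝ) - 1)) * α := by ring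
    rw [hring]
    linarith

lemma exW_zero : exW p (fun _ => (0:ℝ)) = 0 := by
  unfold exW
  simp

lemma gW_nil (hp : IsProbW p) (hκ2 : 2 ≤ κ)
    (hlaw : ∀ x yf : ℕ → Bool,
      prW p (fun ω => ∀ i, 1 ≤ i → i ≤ κ → X i ω = x i ∧ Y i ω = yf i) =
        ∏ i ∈ Finset.Icc 1 κ, ((1 / 2 : ℝ) * if yf i = x i then 1 - pc else pc))
    (hSdef : ∀ ω, S ω = if X 1 ω = true then 1 else κ) :
    gW p Y S (fun _ => κ) [] = ((κ:ℝ) - 1) / 2 := by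
  have hExt : ∀ f : ℕ → Bool, ExtN ([] : List Bool) f := by
    intro f i
    exact absurd i.2 (Nat.not_lt_zero _)
  have haW : aW p Y S ([] : List Bool) = 1 := by
    unfold aW
    apply prW_of_all p hp
    intro ω
    refine ⟨hExt _, ?_⟩
    have := S_ge X κ S hκ2 hSdef ω
    show ([] : List Bool).length < S ω
    simp only [List.length_nil]
    omega
  have haSub : aSubW p Y S ([] : List Bool) (fun _ => κ) = 0 :=
    aSubW_eval p X Y κ S hκ2 hSdef []
  have hbW : bW p Y S ([] : List Bool) = 0 := by
    unfold bW
    rw [exW_congr p (g := fun _ => (0:ℝ)) ?_, exW_zero]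
    intro ω
    rw [if_pos (hExt _)]
    unfold posP
    apply max_eq_right
    simp only [List.length_nil, Nat.cast_zero]
    have := S_ge X κ S hκ2 hSdef ω
    have h2 : (1:ℝ) ≤ (S ω : ℝ) := by exact_mod_cast this
    linarith
  have hbSub : bSubW p Y S ([] : List Bool) (fun _ => κ) = ((κ:ℝ) - 1) * (1/2) := by
    unfold bSubW
    have hstep : ∀ ω, (if ExtN ([] : List Bool) (pathOf Y ω)
        then posP ((((fun _ : ℕ → Bool => κ) (pathOf Y ω) : ℕ) : ℝ) - (S ω : ℝ)) else 0)
        = (if X 1 ω = true then ((κ:ℝ) - 1) else 0) := by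
      intro ω
      rw [if_pos (hExt _)]
      exact posP_eval X κ S hκ2 hSdef ((κ:ℝ)) (by exact_mod_cast (by omega : 1 ≤ κ)) le_rfl ω
    rw [exW_congr p hstep,
      exW_indicator p (fun ω => X 1 ω = true) ((κ:ℝ) - 1),
      prW_X1 p X Y κ pc (by omega) hlaw true]
  unfold gW
  rw [haW, haSub, hbW, hbSub]
  ring

lemma part2 (hp : IsProbW p) (hκ2 : 2 ≤ κ) (hpc0 : 0 < pc) (hpc1 : pc < 1/2)
    (hlaw : ∀ x yf : ℕ → Bool,
      prW p (fun ω => ∀ i, 1 ≤ i → i ≤ κ → X i ω = x i ∧ Y i ω = yf i) =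
        ∏ i ∈ Finset.Icc 1 κ, ((1 / 2 : ℝ) * if yf i = x i then 1 - pc else pc))
    (hSdef : ∀ ω, S ω = if X 1 ω = true then 1 else κ) :
    sSup ((fun y => gW p Y S (fun _ => κ) y) '' {y : List Bool | y.length < κ})
      = ((1 - pc) / pc) * ((κ : ℝ) - 1) := by
  have hκR : (2:ℝ) ≤ (κ:ℝ) := by exact_mod_cast hκ2
  apply IsGreatest.csSup_eq
  constructor
  · refine ⟨[true], by simp only [Set.mem_setOf_eq, List.length_singleton]; omega, ?_⟩
    have hn1 : 1 ≤ ([true] : List Bool).length := by simp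
    have hnκ : ([true] : List Bool).length < κ := by
      simp only [List.length_singleton]
      omega
    simp only
    rw [gW_eval p X Y κ pc S hκ2 hpc0 hpc1 hlaw hSdef [true] hn1 hnκ]
    have hg : ([true] : List Bool).get ⟨0, hn1⟩ = true := rfl
    rw [hg, muB_tt, muB_tf]
    simp only [List.length_singleton, Nat.cast_one]
    ring
  · rintro z ⟨y, hy, rfl⟩
    simp only [Set.mem_setOf_eq] at hy
    simp only
    by_cases h0 : y.length = 0
    · have hnil : y = [] := List.length_eq_zero_iff.1 h0
      subst hnil
      rw [gW_nil p X Y κ pc S hp hκ2 hlaw hSdef]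
      have h1 : (1:ℝ) ≤ (1 - pc)/pc := by
        rw [le_div_iff₀ hpc0]
        linarith
      have h2 : (0:ℝ) ≤ (κ:ℝ) - 1 := by linarith
      nlinarith
    · have hn1 : 1 ≤ y.length := by omega
      rw [gW_eval p X Y κ pc S hκ2 hpc0 hpc1 hlaw hSdef y hn1 hy]
      have hnR : (1:ℝ) ≤ (y.length : ℝ) := by exact_mod_cast hn1
      have hκn : (y.length : ℝ) + 1 ≤ (κ:ℝ) := by exact_mod_cast hy
      have hpc2 : pc ≤ 1 - pc := by linarith
      cases hb : y.get ⟨0, hn1⟩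
      · rw [muB_ft, muB_ff]
        rw [div_le_iff₀ (by linarith : (0:ℝ) < 1 - pc)]
        have hfrac : (1 - pc)/pc * ((κ:ℝ) - 1) * (1 - pc) = (1 - pc) * (1 - pc) * ((κ:ℝ) - 1) / pc := by
          ring
        rw [hfrac, le_div_iff₀ hpc0]
        nlinarith [mul_le_mul_of_nonneg_right hpc2 (le_of_lt hpc0),
          mul_le_mul_of_nonneg_left hpc2 (by linarith : (0:ℝ) ≤ 1 - pc)]
      · rw [muB_tt, muB_tf]
        have hfrac : (1 - pc)/pc * ((κ:ℝ) - 1) = (1 - pc) * ((κ:ℝ) - 1) / pc := by ring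
        rw [hfrac, div_le_div_iff₀ hpc0 hpc0]
        have e : ((κ:ℝ) - (y.length:ℝ)) * ((1 - pc) * pc) ≤ ((κ:ℝ) - 1) * ((1 - pc) * pc) :=
          mul_le_mul_of_nonneg_right (by linarith) (by nlinarith)
        nlinarith [e]

end Final
end
/-- in the binary-symmetric tracking example (X i.i.d. Bernoulli(1/2),
Y the BSC(p) output of X, S = 1 if X₁ = 1 else κ): `d(0) = (κ-1)/2`,
`λ₁ = ((1-p)/p)(κ-1)`, and `d(α) ≥ (κ-1)(1/2 - α(1-p)/p)`. -/
theorem bsc_example_bound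
    {Ω : Type*} [Fintype Ω]
    (p : Ω → ℝ) (hp : IsProbW p) (X Y : ℕ → Ω → Bool) (κ : ℕ) (hκ : 2 ≤ κ)
    (pc : ℝ) (hpc0 : 0 < pc) (hpc1 : pc < 1 / 2)
    (hlaw : ∀ x yf : ℕ → Bool,
      prW p (fun ω => ∀ i, 1 ≤ i → i ≤ κ → X i ω = x i ∧ Y i ω = yf i) =
        ∏ i ∈ Finset.Icc 1 κ, ((1 / 2 : ℝ) * if yf i = x i then 1 - pc else pc))
    (S : Ω → ℕ) (hSdef : ∀ ω, S ω = if X 1 ω = true then 1 else κ) :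
    dW p Y S κ 0 = ((κ : ℝ) - 1) / 2 ∧
    sSup ((fun y => gW p Y S (fun _ => κ) y) '' {y : List Bool | y.length < κ}) =
      ((1 - pc) / pc) * ((κ : ℝ) - 1) ∧
    ∀ α ∈ Set.Icc (0 : ℝ) 1,
      ((κ : ℝ) - 1) * (1 / 2 - α * (1 - pc) / pc) ≤ dW p Y S κ α := by
  exact ⟨part1 p X Y κ pc S hp hκ hpc0 hpc1 hlaw hSdef,
    part2 p X Y κ pc S hp hκ hpc0 hpc1 hlaw hSdef,
    fun α hα => part3 p X Y κ pc S hp hκ hpc0 hpc1 hlaw hSdef α hα.1⟩
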